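/- (Decomposition of piecewise affine functions, Lemma 4.5.) Assume T_h^+ and T_h^- both have positive Lebesgue measure and let β^+, β^- > 0, x_P ∈ H, and t_1,…,t_{N−1}, n an orthonormal basis of ℝ^N. Then every function z on T of the form z|_{T_h^±} = z^±|_{T_h^±} with z^± : ℝ^N → ℝ affine admits the decomposition z = a Ψ_T + b Υ_T + Σ_{i=1}^{N−1} c_i Θ_{i,T} + Σ_{i=1}^{N+1} g_i φ_{i,T}, where a = z^+(x_P) − z^-(x_P), b = β^+∇z^+·n − β^-∇z^-·n, c_i = (∇z^+ − ∇z^-)·t_i, and g_i = (1/|F_i|)∫_{F_i} z dH^{N−1}. -/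

import Mathlib

open MeasureTheory Metric Set
open scoped RealInnerProductSpace

noncomputable section

/-- Euclidean space `ℝ^N`. -/
abbrev Euc (N : ℕ) := EuclideanSpace ℝ (Fin N)

/-- The average of `f` over a set `S` with respect to the `(N-1)`-dimensional
Hausdorff measure: `(1/|S|) ∫_S f dH^{N-1}`. -/
noncomputable def faceAvg {N : ℕ} (S : Set (Euc N)) (f : Euc N → ℝ) : ℝ :=
  (μH[(N : ℝ) - 1] S).toReal⁻¹ * ∫ x in S, f x ∂(μH[(N : ℝ) - 1])

/-- Evaluation of the affine function with gradient `p.1` and constant `p.2`. -/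
noncomputable def affEval {N : ℕ} (p : Euc N × ℝ) (x : Euc N) : ℝ := ⟪p.1, x⟫ + p.2

/-- The function equal to `fp` on the positive side of the hyperplane through `x₀`
with normal `nv`, and to `fm` elsewhere. -/
noncomputable def pwFun {N : ℕ} (x₀ nv : Euc N) (fp fm : Euc N → ℝ) (x : Euc N) : ℝ :=
  if 0 < ⟪x - x₀, nv⟫ then fp x else fm x

/-- Membership in the IFE shape function space `S_h(T)`. -/
def IsIFEFun {N : ℕ} (x₀ nv : Euc N) (Hpl : Set (Euc N)) (βp βm : ℝ)
    (φ : Euc N → ℝ) : Prop :=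
  ∃ p m : Euc N × ℝ,
    (∀ x ∈ Hpl, affEval p x = affEval m x) ∧
    βp * ⟪p.1, nv⟫ = βm * ⟪m.1, nv⟫ ∧
    ∀ x, φ x = pwFun x₀ nv (affEval p) (affEval m) x

/-- The defining conditions of the auxiliary functions of Lemma 4.4. -/
def AuxCond {N : ℕ} (F : Fin (N + 1) → Set (Euc N)) (x₀ nv xP : Euc N)
    (t : Fin (N - 1) → Euc N) (βp βm a b : ℝ) (cv : Fin (N - 1) → ℝ)
    (p : (Euc N × ℝ) × (Euc N × ℝ)) : Prop :=
  (∀ j, faceAvg (F j) (pwFun x₀ nv (affEval p.1) (affEval p.2)) = 0) ∧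
  affEval p.1 xP - affEval p.2 xP = a ∧
  βp * ⟪p.1.1, nv⟫ - βm * ⟪p.2.1, nv⟫ = b ∧
  ∀ j, ⟪p.1.1 - p.2.1, t j⟫ = cv j

noncomputable def pwL {N : ℕ} (x₀ nv x : Euc N) : ((Euc N × ℝ) × (Euc N × ℝ)) →ₗ[ℝ] ℝ where
  toFun p := pwFun x₀ nv (affEval p.1) (affEval p.2) x
  map_add' p q := by
    simp only [pwFun, affEval, Prod.fst_add, Prod.snd_add, inner_add_left]
    split_ifs <;> ring
  map_smul' c p := by
    simp only [pwFun, affEval, Prod.smul_fst, Prod.smul_snd, real_inner_smul_left,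
      smul_eq_mul, RingHom.id_apply]
    split_ifs <;> ring

noncomputable def La {N : ℕ} (xP : Euc N) : ((Euc N × ℝ) × (Euc N × ℝ)) →ₗ[ℝ] ℝ where
  toFun p := affEval p.1 xP - affEval p.2 xP
  map_add' p q := by
    simp only [affEval, Prod.fst_add, Prod.snd_add, inner_add_left]; ring
  map_smul' c p := by
    simp only [affEval, Prod.smul_fst, Prod.smul_snd, real_inner_smul_left,
      smul_eq_mul, RingHom.id_apply]; ring

noncomputable def Lb {N : ℕ} (nv : Euc N) (βp βm : ℝ) :
    ((Euc N × ℝ) × (Euc N × ℝ)) →ₗ[ℝ] ℝ where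
  toFun p := βp * ⟪p.1.1, nv⟫ - βm * ⟪p.2.1, nv⟫
  map_add' p q := by
    simp only [Prod.fst_add, Prod.snd_add, inner_add_left]; ring
  map_smul' c p := by
    simp only [Prod.smul_fst, Prod.smul_snd, real_inner_smul_left, smul_eq_mul, RingHom.id_apply]; ring

noncomputable def Lc {N : ℕ} (t : Fin (N - 1) → Euc N) :
    ((Euc N × ℝ) × (Euc N × ℝ)) →ₗ[ℝ] (Fin (N - 1) → ℝ) where
  toFun p := fun j => ⟪p.1.1 - p.2.1, t j⟫
  map_add' p q := by
    funext j
    simp only [Prod.fst_add, Prod.snd_add, inner_sub_left, inner_add_left, Pi.add_apply]; ring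
  map_smul' c p := by
    funext j
    simp only [Prod.smul_fst, Prod.smul_snd, inner_sub_left, real_inner_smul_left, smul_eq_mul,
      RingHom.id_apply, Pi.smul_apply]; ring

noncomputable def Lg {N : ℕ} (F : Fin (N + 1) → Set (Euc N)) (x₀ nv : Euc N)
    (hint : ∀ (j : Fin (N + 1)) (p : (Euc N × ℝ) × (Euc N × ℝ)),
      Integrable (pwFun x₀ nv (affEval p.1) (affEval p.2)) ((μH[(N : ℝ) - 1]).restrict (F j))) :
    ((Euc N × ℝ) × (Euc N × ℝ)) →ₗ[ℝ] (Fin (N + 1) → ℝ) where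
  toFun p := fun j => faceAvg (F j) (pwFun x₀ nv (affEval p.1) (affEval p.2))
  map_add' p q := by
    funext j
    have hfun : pwFun x₀ nv (affEval (p + q).1) (affEval (p + q).2)
        = fun x => pwFun x₀ nv (affEval p.1) (affEval p.2) x
            + pwFun x₀ nv (affEval q.1) (affEval q.2) x := by
      funext x
      exact map_add (pwL x₀ nv x) p q
    simp only [faceAvg, hfun, Pi.add_apply]
    rw [integral_add (hint j p) (hint j q)]
    ring
  map_smul' c p := by
    funext j
    have hfun : pwFun x₀ nv (affEval (c • p).1) (affEval (c • p).2)
        = fun x => c * pwFun x₀ nv (affEval p.1) (affEval p.2) x := by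
      funext x
      exact map_smul (pwL x₀ nv x) c p
    simp only [faceAvg, hfun, RingHom.id_apply, Pi.smul_apply, smul_eq_mul]
    rw [integral_const_mul]
    ring

/-- Lemma 4.5 (decomposition of piecewise affine functions): every piecewise affine
`z` decomposes as `z = a Ψ_T + b Υ_T + Σ c_i Θ_{i,T} + Σ g_i φ_{i,T}` on `T`, with
`a = z⁺(x_P) - z⁻(x_P)`, `b = β⁺∇z⁺·n - β⁻∇z⁻·n`, `c_i = (∇z⁺ - ∇z⁻)·t_i`,
`g_i = (1/|F_i|)∫_{F_i} z`. -/
theorem statement9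
    (N : ℕ) (hN : N = 2 ∨ N = 3)
    (v : Fin (N + 1) → Euc N) (hv : AffineIndependent ℝ v)
    (Tset : Set (Euc N)) (hTset : Tset = convexHull ℝ (Set.range v))
    (F : Fin (N + 1) → Set (Euc N))
    (hF : ∀ i, F i = convexHull ℝ (v '' ({i}ᶜ : Set (Fin (N + 1)))))
    (nv x₀ : Euc N) (hn : ‖nv‖ = 1)
    (Hpl : Set (Euc N)) (hH : Hpl = {x | ⟪x - x₀, nv⟫ = 0})
    (Tplus Tminus : Set (Euc N))
    (hTplus : Tplus = {x ∈ Tset | 0 < ⟪x - x₀, nv⟫})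
    (hTminus : Tminus = {x ∈ Tset | ⟪x - x₀, nv⟫ < 0})
    (hvolp : 0 < volume Tplus) (hvolm : 0 < volume Tminus)
    (βp βm : ℝ) (hβp : 0 < βp) (hβm : 0 < βm)
    (xP : Euc N) (hxP : xP ∈ Hpl)
    (t : Fin (N - 1) → Euc N)
    (ht1 : ∀ j, ‖t j‖ = 1)
    (ht2 : ∀ j k, j ≠ k → ⟪t j, t k⟫ = 0)
    (ht3 : ∀ j, ⟪t j, nv⟫ = 0)
    -- the IFE basis functions φ_{i,T}, given through their affine pieces
    (φb : Fin (N + 1) → Euc N → ℝ)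
    (hφb : ∀ i, IsIFEFun x₀ nv Hpl βp βm (φb i) ∧
      ∀ j, faceAvg (F j) (φb i) = if i = j then (1 : ℝ) else 0)
    -- the auxiliary functions Ψ_T, Υ_T, Θ_{i,T}
    (pΨ : (Euc N × ℝ) × (Euc N × ℝ))
    (hΨ : AuxCond F x₀ nv xP t βp βm 1 0 (fun _ => 0) pΨ)
    (pΥ : (Euc N × ℝ) × (Euc N × ℝ))
    (hΥ : AuxCond F x₀ nv xP t βp βm 0 1 (fun _ => 0) pΥ)
    (pΘ : Fin (N - 1) → (Euc N × ℝ) × (Euc N × ℝ))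
    (hΘ : ∀ i, AuxCond F x₀ nv xP t βp βm 0 0 (fun j => if i = j then 1 else 0) (pΘ i))
    -- an arbitrary piecewise affine function z, with pieces z⁺ = pz.1, z⁻ = pz.2
    (pz : (Euc N × ℝ) × (Euc N × ℝ))
    (a b : ℝ) (cvec : Fin (N - 1) → ℝ) (gvec : Fin (N + 1) → ℝ)
    (ha : a = affEval pz.1 xP - affEval pz.2 xP)
    (hb : b = βp * ⟪pz.1.1, nv⟫ - βm * ⟪pz.2.1, nv⟫)
    (hc : ∀ i, cvec i = ⟪pz.1.1 - pz.2.1, t i⟫)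
    (hg : ∀ i, gvec i = faceAvg (F i) (pwFun x₀ nv (affEval pz.1) (affEval pz.2))) :
    ∀ x ∈ Tset,
      pwFun x₀ nv (affEval pz.1) (affEval pz.2) x =
        a * pwFun x₀ nv (affEval pΨ.1) (affEval pΨ.2) x +
        b * pwFun x₀ nv (affEval pΥ.1) (affEval pΥ.2) x +
        (∑ i, cvec i * pwFun x₀ nv (affEval (pΘ i).1) (affEval (pΘ i).2) x) +
        ∑ i, gvec i * φb i x := by
  classical
  choose pp mm hpm1 hpm2 hpm3 using fun i => (hφb i).1
  -- the faces have finite, nonzero Hausdorff measure (else the basis averages were 0)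
  have hμF : ∀ j, μH[(N : ℝ) - 1] (F j) ≠ ⊤ := by
    intro j htop
    have h := (hφb j).2 j
    simp [faceAvg, htop] at h
  have hFcomp : ∀ j, IsCompact (F j) := by
    intro j
    rw [hF]
    exact (Set.toFinite _).isCompact_convexHull (𝕜 := ℝ)
  have hFmeas : ∀ j, MeasurableSet (F j) := fun j => (hFcomp j).isClosed.measurableSet
  -- integrability of piecewise affine functions on faces
  have hint : ∀ (j : Fin (N + 1)) (p : (Euc N × ℝ) × (Euc N × ℝ)),
      Integrable (pwFun x₀ nv (affEval p.1) (affEval p.2))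
        ((μH[(N : ℝ) - 1]).restrict (F j)) := by
    intro j p
    haveI : IsFiniteMeasure ((μH[(N : ℝ) - 1]).restrict (F j)) :=
      ⟨by rw [Measure.restrict_apply_univ]; exact (hμF j).lt_top⟩
    have hc1 : Continuous (affEval p.1) := by
      unfold affEval
      exact (continuous_const.inner continuous_id).add continuous_const
    have hc2 : Continuous (affEval p.2) := by
      unfold affEval
      exact (continuous_const.inner continuous_id).add continuous_const
    obtain ⟨C1, hC1⟩ := (hFcomp j).exists_bound_of_continuousOn hc1.continuousOn
    obtain ⟨C2, hC2⟩ := (hFcomp j).exists_bound_of_continuousOn hc2.continuousOn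
    refine Integrable.mono' (integrable_const (max C1 C2)) ?_ ?_
    · refine Measurable.aestronglyMeasurable ?_
      unfold pwFun
      refine Measurable.ite ?_ hc1.measurable hc2.measurable
      exact measurableSet_lt measurable_const
        ((continuous_id.sub continuous_const).inner continuous_const).measurable
    · rw [ae_restrict_iff' (hFmeas j)]
      refine ae_of_all _ fun y hy => ?_
      by_cases hcond : 0 < ⟪y - x₀, nv⟫
      · rw [pwFun, if_pos hcond]
        exact le_trans (hC1 y hy) (le_max_left _ _)
      · rw [pwFun, if_neg hcond]
        exact le_trans (hC2 y hy) (le_max_right _ _)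
  -- the linear map collecting all degrees of freedom
  set L : ((Euc N × ℝ) × (Euc N × ℝ)) →ₗ[ℝ] (ℝ × ℝ × (Fin (N - 1) → ℝ) × (Fin (N + 1) → ℝ)) :=
    (La xP).prod ((Lb nv βp βm).prod ((Lc t).prod (Lg F x₀ nv hint))) with hLdef
  have hLΨ : L pΨ = (1, 0, fun _ => 0, fun _ => 0) := by
    obtain ⟨h0, h1, h2, h3⟩ := hΨ
    exact Prod.ext h1 (Prod.ext h2 (Prod.ext (funext h3) (funext h0)))
  have hLΥ : L pΥ = (0, 1, fun _ => 0, fun _ => 0) := by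
    obtain ⟨h0, h1, h2, h3⟩ := hΥ
    exact Prod.ext h1 (Prod.ext h2 (Prod.ext (funext h3) (funext h0)))
  have hLΘ : ∀ i, L (pΘ i) = (0, 0, fun j => if i = j then (1 : ℝ) else 0, fun _ => 0) := by
    intro i
    obtain ⟨h0, h1, h2, h3⟩ := hΘ i
    exact Prod.ext h1 (Prod.ext h2 (Prod.ext (funext h3) (funext h0)))
  have tangent0 : ∀ (pr : (Euc N × ℝ) × (Euc N × ℝ)),
      (∀ y ∈ Hpl, affEval pr.1 y = affEval pr.2 y) → ∀ j, ⟪pr.1.1 - pr.2.1, t j⟫ = 0 := by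
    intro pr hpr j
    have hx0 : x₀ ∈ Hpl := by
      rw [hH]
      simp only [Set.mem_setOf_eq, sub_self, inner_zero_left]
    have hx1 : x₀ + t j ∈ Hpl := by
      rw [hH]
      simp only [Set.mem_setOf_eq, add_sub_cancel_left]
      exact ht3 j
    have e0 := hpr x₀ hx0
    have e1 := hpr _ hx1
    simp only [affEval, inner_add_right] at e0 e1
    rw [inner_sub_left]
    linarith
  have hLφ : ∀ i, L (pp i, mm i)
      = (0, 0, fun _ => 0, fun j => if i = j then (1 : ℝ) else 0) := by
    intro i
    refine Prod.ext ?_ (Prod.ext ?_ (Prod.ext ?_ ?_))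
    · show affEval (pp i) xP - affEval (mm i) xP = 0
      rw [hpm1 i xP hxP]; ring
    · show βp * ⟪(pp i).1, nv⟫ - βm * ⟪(mm i).1, nv⟫ = 0
      rw [hpm2 i]; ring
    · funext j
      exact tangent0 (pp i, mm i) (hpm1 i) j
    · funext j
      show faceAvg (F j) (pwFun x₀ nv (affEval (pp i)) (affEval (mm i))) = _
      rw [show pwFun x₀ nv (affEval (pp i)) (affEval (mm i)) = φb i from
        funext fun y => (hpm3 i y).symm]
      exact (hφb i).2 j
  have hkey : ∀ (α β' : ℝ) (γ : Fin (N - 1) → ℝ) (δ : Fin (N + 1) → ℝ),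
      L (α • pΨ + β' • pΥ + (∑ i, γ i • pΘ i) + ∑ i, δ i • (pp i, mm i))
        = (α, β', γ, δ) := by
    intro α β' γ δ
    rw [map_add, map_add, map_add, L.map_smul, L.map_smul, map_sum, map_sum]
    simp only [LinearMap.map_smul, hLΨ, hLΥ, hLΘ, hLφ]
    refine Prod.ext ?_ (Prod.ext ?_ (Prod.ext ?_ ?_))
    · simp [Prod.fst_add, Prod.smul_fst, Prod.fst_sum]
    · simp [Prod.fst_add, Prod.snd_add, Prod.smul_fst, Prod.smul_snd, Prod.fst_sum, Prod.snd_sum]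
    · funext j
      simp [Prod.fst_add, Prod.snd_add, Prod.smul_fst, Prod.smul_snd, Prod.fst_sum, Prod.snd_sum,
        Finset.sum_apply, Pi.smul_apply, smul_eq_mul, mul_ite, Finset.sum_ite_eq']
    · funext j
      simp [Prod.fst_add, Prod.snd_add, Prod.smul_fst, Prod.smul_snd, Prod.fst_sum, Prod.snd_sum,
        Finset.sum_apply, Pi.smul_apply, smul_eq_mul, mul_ite, Finset.sum_ite_eq']
  have hfr : Module.finrank ℝ ((Euc N × ℝ) × (Euc N × ℝ))
      = Module.finrank ℝ (ℝ × ℝ × (Fin (N - 1) → ℝ) × (Fin (N + 1) → ℝ)) := by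
    rcases hN with h | h <;> subst h <;>
      simp [Module.finrank_prod, finrank_euclideanSpace_fin, Module.finrank_self,
        Module.finrank_fintype_fun_eq_card]
  have hinj : Function.Injective L :=
    (LinearMap.injective_iff_surjective_of_finrank_eq_finrank hfr).2
      (by rintro ⟨α, β', γ, δ⟩; exact ⟨_, hkey α β' γ δ⟩)
  have hLz : L pz = (a, b, cvec, gvec) :=
    Prod.ext ha.symm (Prod.ext hb.symm
      (Prod.ext (funext fun j => (hc j).symm) (funext fun j => (hg j).symm)))
  have hzdec : pz = a • pΨ + b • pΥ + (∑ i, cvec i • pΘ i) + ∑ i, gvec i • (pp i, mm i) :=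
    hinj (hLz.trans (hkey a b cvec gvec).symm)
  intro x hx
  have hev := congrArg (pwL x₀ nv x) hzdec
  simp only [map_add, LinearMap.map_smul, map_sum, smul_eq_mul] at hev
  have hcoe : ∀ pr : (Euc N × ℝ) × (Euc N × ℝ),
      pwL x₀ nv x pr = pwFun x₀ nv (affEval pr.1) (affEval pr.2) x := fun _ => rfl
  simp only [hcoe] at hev
  simp only [fun i => hpm3 i x]
  exact hev
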